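/- Let G be the r-subdivision of the complete graph K_n with n ≥ 4. Then G has no (1, r+1+⌈r/2⌉)-cowitness for the pair (V(G), G) of size smaller than ⌊(n−1)/2⌋. -/

import Mathlib

/-- Edges of `K_n`, as ordered pairs. -/
abbrev EdgeKn (n : ℕ) := {p : Fin n × Fin n // p.1 < p.2}

/-- Vertices of the `r`-subdivision of `K_n`: branch vertices plus `r` internal
vertices on each edge. -/
abbrev SubVert (n r : ℕ) := Fin n ⊕ (EdgeKn n × Fin r)

/-- Adjacency of the `r`-subdivision of `K_n`: internal vertex `(e, i)` lies at
distance `i + 1` from `e.1.1` along the subdivided edge `e`. -/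
def subAdj (n r : ℕ) : SubVert n r → SubVert n r → Prop
  | Sum.inl u, Sum.inl v => r = 0 ∧ u ≠ v
  | Sum.inl u, Sum.inr (e, i) => (u = e.1.1 ∧ (i : ℕ) = 0) ∨ (u = e.1.2 ∧ (i : ℕ) = r - 1)
  | Sum.inr (e, i), Sum.inl u => (u = e.1.1 ∧ (i : ℕ) = 0) ∨ (u = e.1.2 ∧ (i : ℕ) = r - 1)
  | Sum.inr (e, i), Sum.inr (e', j) => e = e' ∧ ((i : ℕ) + 1 = j ∨ (j : ℕ) + 1 = i)

/-- The `r`-subdivision of the complete graph `K_n`. -/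
def subdivK (n r : ℕ) : SimpleGraph (SubVert n r) where
  Adj := subAdj n r
  symm := by
    constructor
    rintro (u | ⟨e, i⟩) (v | ⟨e', j⟩) h <;> simp only [subAdj] at h ⊢ <;> tauto
  loopless := by
    constructor
    rintro (u | ⟨e, i⟩) h <;> simp only [subAdj] at h
    · exact h.2 rfl
    · rcases h with ⟨-, h | h⟩ <;> omega

namespace SubdivAux

open SimpleGraph

variable {n r : ℕ}

/-- Lower bound on distance from branch vertex `v`. -/
def dLB (n r : ℕ) (v : Fin n) : SubVert n r → ℕ
  | Sum.inl u => if u = v then 0 else r + 1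
  | Sum.inr (e, i) =>
      if v = e.1.1 then min ((i : ℕ) + 1) (2 * r + 1 - (i : ℕ))
      else if v = e.1.2 then min (r - (i : ℕ)) (r + 2 + (i : ℕ))
      else r + 1 + min ((i : ℕ) + 1) (r - (i : ℕ))

/-- Adjacency helpers. -/
lemma adj_inl_inl (hr : r = 0) {u v : Fin n} (h : u ≠ v) :
    (subdivK n r).Adj (Sum.inl u) (Sum.inl v) :=
  show subAdj n r (Sum.inl u) (Sum.inl v) from ⟨hr, h⟩

lemma adj_inr_inl₁ (e : EdgeKn n) (i : Fin r) (h0 : (i : ℕ) = 0) :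
    (subdivK n r).Adj (Sum.inr (e, i)) (Sum.inl e.1.1) :=
  show subAdj n r (Sum.inr (e, i)) (Sum.inl e.1.1) from Or.inl ⟨rfl, h0⟩

lemma adj_inr_inl₂ (e : EdgeKn n) (i : Fin r) (h0 : (i : ℕ) = r - 1) :
    (subdivK n r).Adj (Sum.inr (e, i)) (Sum.inl e.1.2) :=
  show subAdj n r (Sum.inr (e, i)) (Sum.inl e.1.2) from Or.inr ⟨rfl, h0⟩

lemma adj_inl_inr₁ (e : EdgeKn n) (i : Fin r) (h0 : (i : ℕ) = 0) :
    (subdivK n r).Adj (Sum.inl e.1.1) (Sum.inr (e, i)) :=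
  show subAdj n r (Sum.inl e.1.1) (Sum.inr (e, i)) from Or.inl ⟨rfl, h0⟩

lemma adj_inr_inr (e : EdgeKn n) (i j : Fin r) (h : (i : ℕ) + 1 = j ∨ (j : ℕ) + 1 = i) :
    (subdivK n r).Adj (Sum.inr (e, i)) (Sum.inr (e, j)) :=
  show subAdj n r (Sum.inr (e, i)) (Sum.inr (e, j)) from ⟨rfl, h⟩

lemma dLB_lip (v : Fin n) {a b : SubVert n r} (h : subAdj n r a b) :
    dLB n r v b ≤ dLB n r v a + 1 := by
  match a, b with
  | Sum.inl u, Sum.inl u' =>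
      obtain ⟨hr, -⟩ := h
      simp only [dLB]; split_ifs <;> omega
  | Sum.inl u, Sum.inr (e, i) =>
      have hi := i.isLt
      have hlt : ((e.1.1 : Fin n) : ℕ) < ((e.1.2 : Fin n) : ℕ) := e.2
      simp only [dLB]
      rcases h with ⟨rfl, h0⟩ | ⟨rfl, h0⟩ <;> split_ifs <;>
        simp only [Fin.ext_iff] at * <;> omega
  | Sum.inr (e, i), Sum.inl u =>
      have hi := i.isLt
      have hlt : ((e.1.1 : Fin n) : ℕ) < ((e.1.2 : Fin n) : ℕ) := e.2
      simp only [dLB]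
      rcases h with ⟨rfl, h0⟩ | ⟨rfl, h0⟩ <;> split_ifs <;>
        simp only [Fin.ext_iff] at * <;> omega
  | Sum.inr (e, i), Sum.inr (e', j) =>
      obtain ⟨rfl, h2⟩ := h
      have hi := i.isLt
      have hj := j.isLt
      simp only [dLB]; split_ifs <;> omega

lemma dLB_le_walk (v : Fin n) {x y : SubVert n r} (w : (subdivK n r).Walk x y) :
    dLB n r v y ≤ dLB n r v x + w.length := by
  induction w with
  | nil => simp
  | cons h p ih =>
      rename_i a b c
      have := dLB_lip v (h : subAdj n r a b)
      simp only [Walk.length_cons]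
      omega

/-- Being in the star of `v`. -/
def inStar (v : Fin n) : SubVert n r → Prop
  | Sum.inl u => u = v
  | Sum.inr (e, _) => v = e.1.1 ∨ v = e.1.2

lemma inStar_of_small (v : Fin n) (x : SubVert n r)
    (h : 2 * dLB n r v x ≤ r + 1 + (r + 1) / 2) : inStar v x := by
  match x with
  | Sum.inl u =>
      simp only [dLB] at h
      simp only [inStar]
      by_contra hne
      rw [if_neg hne] at h
      omega
  | Sum.inr (e, i) =>
      have hi := i.isLt
      simp only [dLB] at h
      simp only [inStar]
      by_contra hne
      push_neg at hne
      rw [if_neg hne.1, if_neg hne.2] at h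
      omega

lemma support_star (v : Fin n) (w : (subdivK n r).Walk (Sum.inl v) (Sum.inl v))
    (hw : w.length ≤ r + 1 + (r + 1) / 2) :
    ∀ x ∈ w.support, inStar v x := by
  intro x hx
  obtain ⟨w1, w2, rfl⟩ := Walk.mem_support_iff_exists_append.mp hx
  have h1 := dLB_le_walk v w1
  have h2 := dLB_le_walk v w2.reverse
  rw [Walk.length_reverse] at h2
  rw [Walk.length_append] at hw
  have hv : dLB n r v (Sum.inl v) = 0 := by simp [dLB]
  rw [hv] at h1 h2
  exact inStar_of_small v x (by omega)

/-- Walk from internal vertex `(e, i)` to first endpoint, length `i+1`. -/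
lemma walkA (e : EdgeKn n) (i : ℕ) (h : i < r) :
    ∃ w : (subdivK n r).Walk (Sum.inr (e, ⟨i, h⟩)) (Sum.inl e.1.1), w.length = i + 1 := by
  induction i with
  | zero => exact ⟨Walk.cons (adj_inr_inl₁ e ⟨0, h⟩ rfl) Walk.nil, rfl⟩
  | succ i ih =>
      obtain ⟨w, hw⟩ := ih (by omega)
      exact ⟨Walk.cons (adj_inr_inr e ⟨i + 1, h⟩ ⟨i, by omega⟩ (Or.inr rfl)) w, by simp [hw]⟩

/-- Walk from internal vertex `(e, r-1-k)` to second endpoint, length `k+1`. -/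
lemma walkB (e : EdgeKn n) (k : ℕ) (h : k < r) :
    ∃ w : (subdivK n r).Walk (Sum.inr (e, ⟨r - 1 - k, by omega⟩)) (Sum.inl e.1.2),
      w.length = k + 1 := by
  induction k with
  | zero => exact ⟨Walk.cons (adj_inr_inl₂ e ⟨r - 1 - 0, by omega⟩ rfl) Walk.nil, by simp⟩
  | succ k ih =>
      obtain ⟨w, hw⟩ := ih (by omega)
      exact ⟨Walk.cons (adj_inr_inr e ⟨r - 1 - (k + 1), by omega⟩ ⟨r - 1 - k, by omega⟩
        (Or.inl (by simp only [Fin.val_mk]; omega))) w, by simp [hw]⟩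

lemma walkB' (e : EdgeKn n) (i : Fin r) :
    ∃ w : (subdivK n r).Walk (Sum.inr (e, i)) (Sum.inl e.1.2), w.length = r - (i : ℕ) := by
  have hi := i.isLt
  obtain ⟨w, hw⟩ := walkB (n := n) (r := r) e (r - 1 - (i : ℕ)) (by omega)
  have hval : r - 1 - (r - 1 - (i : ℕ)) = (i : ℕ) := by omega
  have hcast : (Sum.inr (e, ⟨r - 1 - (r - 1 - (i : ℕ)), by omega⟩) : SubVert n r)
      = Sum.inr (e, i) := by
    rw [Sum.inr.injEq, Prod.mk.injEq]
    exact ⟨rfl, Fin.ext hval⟩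
  refine ⟨w.copy hcast rfl, ?_⟩
  rw [Walk.length_copy, hw]; omega

lemma walkA' (e : EdgeKn n) (i : Fin r) :
    ∃ w : (subdivK n r).Walk (Sum.inr (e, i)) (Sum.inl e.1.1), w.length = (i : ℕ) + 1 := by
  obtain ⟨w, hw⟩ := walkA e (i : ℕ) i.isLt
  exact ⟨w, hw⟩

/-- Walk between the endpoints of an edge, length `r+1`. -/
lemma walkEdge (e : EdgeKn n) :
    ∃ w : (subdivK n r).Walk (Sum.inl e.1.1) (Sum.inl e.1.2), w.length = r + 1 := by
  rcases Nat.eq_zero_or_pos r with hr | hr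
  · subst hr
    exact ⟨Walk.cons (adj_inl_inl rfl e.2.ne) Walk.nil, rfl⟩
  · obtain ⟨w, hw⟩ := walkB' e ⟨0, hr⟩
    exact ⟨Walk.cons (adj_inl_inr₁ e ⟨0, hr⟩ rfl) w, by simp [hw]⟩

lemma walkBetween (a b : Fin n) (hab : a ≠ b) :
    ∃ w : (subdivK n r).Walk (Sum.inl a) (Sum.inl b), w.length = r + 1 := by
  rcases lt_or_gt_of_ne hab with h | h
  · obtain ⟨w, hw⟩ := walkEdge (n := n) (r := r) ⟨(a, b), h⟩
    exact ⟨w, hw⟩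
  · obtain ⟨w, hw⟩ := walkEdge (n := n) (r := r) ⟨(b, a), h⟩
    exact ⟨w.reverse, by simp [hw]⟩

lemma ecc (v : Fin n) (u : SubVert n r) :
    (subdivK n r).edist u (Sum.inl v) ≤ ((r + 1 + (r + 1) / 2 : ℕ) : ℕ∞) := by
  have key : ∃ w : (subdivK n r).Walk u (Sum.inl v), w.length ≤ r + 1 + (r + 1) / 2 := by
    match u with
    | Sum.inl a =>
        rcases eq_or_ne a v with rfl | hne
        · exact ⟨Walk.nil, by simp⟩
        · obtain ⟨w, hw⟩ := walkBetween (n := n) (r := r) a v hne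
          exact ⟨w, by omega⟩
    | Sum.inr (e, i) =>
        have hi := i.isLt
        rcases eq_or_ne v e.1.1 with rfl | h1
        · obtain ⟨w, hw⟩ := walkA' e i
          exact ⟨w, by omega⟩
        rcases eq_or_ne v e.1.2 with rfl | h2
        · obtain ⟨w, hw⟩ := walkB' e i
          exact ⟨w, by omega⟩
        rcases le_or_gt (2 * ((i : ℕ) + 1)) (r + 1) with hside | hside
        · obtain ⟨w1, hw1⟩ := walkA' e i
          obtain ⟨w2, hw2⟩ := walkBetween (n := n) (r := r) e.1.1 v (Ne.symm h1)
          exact ⟨w1.append w2, by rw [Walk.length_append]; omega⟩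
        · obtain ⟨w1, hw1⟩ := walkB' e i
          obtain ⟨w2, hw2⟩ := walkBetween (n := n) (r := r) e.1.2 v (Ne.symm h2)
          exact ⟨w1.append w2, by rw [Walk.length_append]; omega⟩
  obtain ⟨w, hw⟩ := key
  exact le_trans w.edist_le (by exact_mod_cast hw)

end SubdivAux

/-- The `r`-subdivision of `K_n` (with `n ≥ 4`) has no `(1, r + 1 + ⌈r/2⌉)`-cowitness
for the pair `(V(G), G)` of size smaller than `⌊(n - 1) / 2⌋`. -/
theorem subdivK_no_small_cowitness (n r : ℕ) (hn : 4 ≤ n)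
    (Q : Finset (SubVert n r)) (hQ : Q.card < (n - 1) / 2) :
    ¬ (∀ x : SubVert n r,
        (∀ u : SubVert n r,
          (subdivK n r).edist u x ≤ ((r + 1 + (r + 1) / 2 : ℕ) : ℕ∞)) →
        ∀ a : SubVert n r, ∃ q ∈ Q, ∃ w : (subdivK n r).Walk x a,
          w.length ≤ r + 1 + (r + 1) / 2 ∧ q ∈ w.support) := by
  intro H
  have key : ∀ v : Fin n, ∃ q ∈ Q, SubdivAux.inStar v q := by
    intro v
    obtain ⟨q, hq, w, hlen, hmem⟩ := H (Sum.inl v) (fun u => SubdivAux.ecc v u) (Sum.inl v)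
    exact ⟨q, hq, SubdivAux.support_star v w hlen q hmem⟩
  choose g hgQ hgStar using key
  have hcard : (Finset.univ : Finset (Fin n)).card ≤ 2 * (Finset.univ.image g).card := by
    apply Finset.card_le_mul_card_image
    intro q hq
    rcases q with u | ⟨e, i⟩
    · calc (Finset.univ.filter fun v => g v = Sum.inl u).card
          ≤ ({u} : Finset (Fin n)).card := by
            apply Finset.card_le_card
            intro v hv
            simp only [Finset.mem_filter] at hv
            have := hgStar v
            rw [hv.2] at this
            simp only [SubdivAux.inStar] at this
            simp [this]
        _ ≤ 2 := by simp
    · calc (Finset.univ.filter fun v => g v = Sum.inr (e, i)).card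
          ≤ ({e.1.1, e.1.2} : Finset (Fin n)).card := by
            apply Finset.card_le_card
            intro v hv
            simp only [Finset.mem_filter] at hv
            have := hgStar v
            rw [hv.2] at this
            simp only [SubdivAux.inStar] at this
            rcases this with h | h <;> simp [h]
        _ ≤ 2 := Finset.card_insert_le _ _ |>.trans (by simp)
  have himg : (Finset.univ.image g).card ≤ Q.card :=
    Finset.card_le_card (fun q hq => by
      obtain ⟨v, -, rfl⟩ := Finset.mem_image.mp hq
      exact hgQ v)
  simp only [Finset.card_univ, Fintype.card_fin] at hcard
  omega
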